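/- Let F be a finite field with |F| = q ≥ 2. Under the uniform distribution on tuples (a,b,c,d,k13,k14,k25,k26,k47,k57,k78,k79) ∈ F^12, the probability that BOTH decoding matrices F_{t1} = [[a·k13, (a·k14·k47 + c·k25·k57)·k78], [b·k13, (b·k14·k47 + d·k25·k57)·k78]] and F_{t2} = [[c·k26, (a·k14·k47 + c·k25·k57)·k79], [d·k26, (b·k14·k47 + d·k25·k57)·k79]] are invertible equals (q+1)(q-1)^10/q^11. Equivalently, the number of such tuples in F^12 making both matrices invertible is q(q+1)(q-1)^10, so the failure probability of the butterfly network (that at least one sink cannot decode) is P_e = 1 − (q+1)(q-1)^10/q^11. -/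

import Mathlib

/- The decoding matrix at sink `t₁` of the butterfly network. -/
def Ft1 {F : Type*} [Field F] (a b c d k13 k14 k47 k78 k25 k57 : F) :
    Matrix (Fin 2) (Fin 2) F :=
  !![a * k13, (a * k14 * k47 + c * k25 * k57) * k78;
     b * k13, (b * k14 * k47 + d * k25 * k57) * k78]

/- The decoding matrix at sink `t₂` of the butterfly network. -/
def Ft2 {F : Type*} [Field F] (a b c d k14 k47 k79 k25 k57 k26 : F) :
    Matrix (Fin 2) (Fin 2) F :=
  !![c * k26, (a * k14 * k47 + c * k25 * k57) * k79;
     d * k26, (b * k14 * k47 + d * k25 * k57) * k79]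

/- STATEMENT 3: over a finite field with `q = |F| ≥ 2`, under the uniform distribution
on tuples `(a,b,c,d,k13,k14,k25,k26,k47,k57,k78,k79) ∈ F^12`
(encoded as `v 0, …, v 11`), the probability that both `F_{t1}` and `F_{t2}` are
invertible is `(q+1)(q-1)^10/q^11`; equivalently the number of such tuples is
`q (q+1)(q-1)^10`, so the failure probability of the butterfly network is
`P_e = 1 - (q+1)(q-1)^10/q^11`. -/
open Finset

section Aux

variable {F : Type*} [Field F] [Fintype F]

lemma pred_iff' (v : Fin 12 → F) :
    (IsUnit (Ft1 (v 0) (v 1) (v 2) (v 3) (v 4) (v 5) (v 8) (v 10) (v 6) (v 9)) ∧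
     IsUnit (Ft2 (v 0) (v 1) (v 2) (v 3) (v 5) (v 8) (v 11) (v 6) (v 9) (v 7))) ↔
    ((v 0 * v 3 - v 1 * v 2 ≠ 0) ∧ ∀ i : Fin 8, v (i.addNat 4) ≠ 0) := by
  rw [Matrix.isUnit_iff_isUnit_det, Matrix.isUnit_iff_isUnit_det, isUnit_iff_ne_zero,
    isUnit_iff_ne_zero, Ft1, Ft2, Matrix.det_fin_two_of, Matrix.det_fin_two_of]
  have h1 : v 0 * v 4 * ((v 1 * v 5 * v 8 + v 3 * v 6 * v 9) * v 10) -
      (v 0 * v 5 * v 8 + v 2 * v 6 * v 9) * v 10 * (v 1 * v 4) =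
      (v 0 * v 3 - v 1 * v 2) * (v 4 * (v 6 * (v 9 * v 10))) := by ring
  have h2 : v 2 * v 7 * ((v 1 * v 5 * v 8 + v 3 * v 6 * v 9) * v 11) -
      (v 0 * v 5 * v 8 + v 2 * v 6 * v 9) * v 11 * (v 3 * v 7) =
      -((v 0 * v 3 - v 1 * v 2) * (v 5 * (v 7 * (v 8 * v 11)))) := by ring
  rw [h1, h2, neg_ne_zero, mul_ne_zero_iff, mul_ne_zero_iff, mul_ne_zero_iff, mul_ne_zero_iff,
    mul_ne_zero_iff, mul_ne_zero_iff, mul_ne_zero_iff, mul_ne_zero_iff]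
  constructor
  · rintro ⟨⟨hd, h4, h6, h9, h10⟩, -, h5, h7, h8, h11⟩
    exact ⟨hd, fun i => by fin_cases i <;> assumption⟩
  · rintro ⟨hd, h⟩
    exact ⟨⟨hd, h 0, h 2, h 5, h 6⟩, hd, h 1, h 3, h 4, h 7⟩

open Classical in
lemma detNeZero_card :
    (univ.filter fun m : (F × F) × F × F => m.1.1 * m.2.2 - m.1.2 * m.2.1 ≠ 0).card =
    (Fintype.card F ^ 2 - 1) * (Fintype.card F ^ 2 - Fintype.card F) := by
  have e : {m : (F × F) × F × F // m.1.1 * m.2.2 - m.1.2 * m.2.1 ≠ 0} ≃ GL (Fin 2) F :=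
    { toFun := fun m => Matrix.GeneralLinearGroup.mkOfDetNeZero
        !![m.1.1.1, m.1.1.2; m.1.2.1, m.1.2.2]
        (by rw [Matrix.det_fin_two_of]; exact m.2)
      invFun := fun U => ⟨((U.val 0 0, U.val 0 1), (U.val 1 0, U.val 1 1)), by
        have h := (Matrix.isUnit_iff_isUnit_det U.val).mp U.isUnit
        rw [isUnit_iff_ne_zero, Matrix.det_fin_two] at h
        exact h⟩
      left_inv := fun m => by
        apply Subtype.ext
        rfl
      right_inv := fun U => by
        apply Units.ext
        exact (Matrix.eta_fin_two U.val).symm }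
  rw [← Fintype.card_subtype, Fintype.card_congr e, ← Nat.card_eq_fintype_card,
    Matrix.card_GL_field, Fin.prod_univ_two]
  simp [mul_comm]

open Classical in
lemma nonzero_tuple_card :
    (univ.filter fun y : Fin 8 → F => ∀ i, y i ≠ 0).card = (Fintype.card F - 1) ^ 8 := by
  have : (univ.filter fun y : Fin 8 → F => ∀ i, y i ≠ 0) =
      Fintype.piFinset fun _ : Fin 8 => (univ.filter fun x : F => x ≠ 0) := by
    ext y; simp [Fintype.mem_piFinset]
  rw [this, Fintype.card_piFinset]
  simp [Finset.filter_ne']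

open Classical in
lemma main_count :
    (univ.filter fun v : Fin 12 → F =>
      (v 0 * v 3 - v 1 * v 2 ≠ 0) ∧ ∀ i : Fin 8, v (i.addNat 4) ≠ 0).card =
    (Fintype.card F ^ 2 - 1) * (Fintype.card F ^ 2 - Fintype.card F) *
      (Fintype.card F - 1) ^ 8 := by
  have key : (univ.filter fun v : Fin 12 → F =>
      (v 0 * v 3 - v 1 * v 2 ≠ 0) ∧ ∀ i : Fin 8, v (i.addNat 4) ≠ 0).card =
      ((univ.filter fun m : (F × F) × F × F => m.1.1 * m.2.2 - m.1.2 * m.2.1 ≠ 0) ×ˢ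
       (univ.filter fun y : Fin 8 → F => ∀ i, y i ≠ 0)).card := by
    apply Finset.card_nbij'
      (i := fun v => (((v 0, v 1), (v 2, v 3)), fun j : Fin 8 => v (j.addNat 4)))
      (j := fun p => ![p.1.1.1, p.1.1.2, p.1.2.1, p.1.2.2,
        p.2 0, p.2 1, p.2 2, p.2 3, p.2 4, p.2 5, p.2 6, p.2 7])
    · intro v hv
      simp only [Finset.mem_coe, Finset.mem_filter, Finset.mem_univ, true_and] at hv ⊢
      rw [Finset.mem_product]
      simp only [Finset.mem_filter, Finset.mem_univ, true_and]
      exact hv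
    · intro p hp
      rw [Finset.mem_coe, Finset.mem_product] at hp
      simp only [Finset.mem_coe, Finset.mem_filter, Finset.mem_univ, true_and] at hp ⊢
      obtain ⟨h1, h2⟩ := hp
      refine ⟨h1, fun i => ?_⟩
      fin_cases i <;> exact h2 _
    · intro v hv
      funext i
      fin_cases i <;> rfl
    · rintro ⟨⟨⟨a, b⟩, c, d⟩, y⟩ hp
      refine Prod.ext (by rfl) (funext fun j => ?_)
      fin_cases j <;> rfl
  rw [key, Finset.card_product, detNeZero_card, nonzero_tuple_card]

end Aux

open Classical in
theorem butterfly_network_failure_probability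
    (F : Type*) [Field F] [Fintype F] (q : ℕ) (hq : Fintype.card F = q) (hq2 : 2 ≤ q) :
    ((Finset.univ.filter fun v : Fin 12 → F =>
        IsUnit (Ft1 (v 0) (v 1) (v 2) (v 3) (v 4) (v 5) (v 8) (v 10) (v 6) (v 9)) ∧
        IsUnit (Ft2 (v 0) (v 1) (v 2) (v 3) (v 5) (v 8) (v 11) (v 6) (v 9) (v 7))).card : ℝ) /
        (q : ℝ) ^ 12 = ((q : ℝ) + 1) * ((q : ℝ) - 1) ^ 10 / (q : ℝ) ^ 11 ∧
    (Finset.univ.filter fun v : Fin 12 → F =>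
        IsUnit (Ft1 (v 0) (v 1) (v 2) (v 3) (v 4) (v 5) (v 8) (v 10) (v 6) (v 9)) ∧
        IsUnit (Ft2 (v 0) (v 1) (v 2) (v 3) (v 5) (v 8) (v 11) (v 6) (v 9) (v 7))).card =
      q * (q + 1) * (q - 1) ^ 10 ∧
    ((Finset.univ.filter fun v : Fin 12 → F =>
        ¬ (IsUnit (Ft1 (v 0) (v 1) (v 2) (v 3) (v 4) (v 5) (v 8) (v 10) (v 6) (v 9)) ∧
           IsUnit (Ft2 (v 0) (v 1) (v 2) (v 3) (v 5) (v 8) (v 11) (v 6) (v 9) (v 7)))).card : ℝ) /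
        (q : ℝ) ^ 12 = 1 - ((q : ℝ) + 1) * ((q : ℝ) - 1) ^ 10 / (q : ℝ) ^ 11 := by
  have hq1 : 1 ≤ q := le_trans (by norm_num) hq2
  have hqq : q ≤ q ^ 2 := by nlinarith
  have hq21 : 1 ≤ q ^ 2 := le_trans hq1 hqq |>.trans_eq rfl
  have hfilter : (Finset.univ.filter fun v : Fin 12 → F =>
        IsUnit (Ft1 (v 0) (v 1) (v 2) (v 3) (v 4) (v 5) (v 8) (v 10) (v 6) (v 9)) ∧
        IsUnit (Ft2 (v 0) (v 1) (v 2) (v 3) (v 5) (v 8) (v 11) (v 6) (v 9) (v 7))) =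
      (Finset.univ.filter fun v : Fin 12 → F =>
        (v 0 * v 3 - v 1 * v 2 ≠ 0) ∧ ∀ i : Fin 8, v (i.addNat 4) ≠ 0) :=
    Finset.filter_congr fun v _ => pred_iff' v
  have hcard : (Finset.univ.filter fun v : Fin 12 → F =>
        IsUnit (Ft1 (v 0) (v 1) (v 2) (v 3) (v 4) (v 5) (v 8) (v 10) (v 6) (v 9)) ∧
        IsUnit (Ft2 (v 0) (v 1) (v 2) (v 3) (v 5) (v 8) (v 11) (v 6) (v 9) (v 7))).card =
      q * (q + 1) * (q - 1) ^ 10 := by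
    rw [hfilter, main_count, hq]
    zify [hq1, hqq, hq21]
    ring
  have huniv : (Finset.univ : Finset (Fin 12 → F)).card = q ^ 12 := by
    simp [Finset.card_univ, hq]
  have hq0 : (q : ℝ) ≠ 0 := by positivity
  have hle : q * (q + 1) * (q - 1) ^ 10 ≤ q ^ 12 := by
    rw [← hcard, ← huniv]; exact Finset.card_filter_le _ _
  refine ⟨?_, hcard, ?_⟩
  · rw [hcard]
    push_cast [Nat.cast_sub hq1]
    field_simp
  · rw [Finset.filter_not, Finset.card_sdiff_of_subset (Finset.filter_subset _ _), hcard, huniv]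
    push_cast [Nat.cast_sub hle, Nat.cast_sub hq1]
    field_simp
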